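/- Let X be a metric space and let T be a lattice isomorphism of C_b(X), the Banach lattice of bounded real-valued continuous functions on X with the supremum norm and pointwise order. Then there exist a function a ∈ C_b(X) with inf a > 0 and a homeomorphism φ : X → X such that (T x)(t) = a(t)·x(φ(t)) for all x ∈ C_b(X) and all t ∈ X. Moreover, ‖a‖_∞ = ‖T‖. -/

import Mathlib

open BoundedContinuousFunction Filter Topology

namespace Stmt19Aux

variable {X : Type*} [MetricSpace X]

/-- A "lattice state" on `C_b(X)`. -/
structure IsLS (m : (X →ᵇ ℝ) → ℝ) : Prop where
  map_add' : ∀ x y, m (x + y) = m x + m y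
  map_smul' : ∀ (c : ℝ) (x), m (c • x) = c * m x
  map_one' : m 1 = 1
  map_sup' : ∀ x y, m (x ⊔ y) = max (m x) (m y)

theorem bcf_le_iff {f g : X →ᵇ ℝ} : f ≤ g ↔ ∀ t, f t ≤ g t := Iff.rfl

namespace IsLS

variable {m : (X →ᵇ ℝ) → ℝ} (hm : IsLS m)
include hm

theorem map_zero' : m 0 = 0 := by simpa using hm.map_smul' 0 0

theorem mono {x y : X →ᵇ ℝ} (h : x ≤ y) : m x ≤ m y := by
  have h2 := hm.map_sup' x y
  rw [sup_eq_right.mpr h] at h2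
  calc m x ≤ max (m x) (m y) := le_max_left _ _
  _ = m y := h2.symm

theorem map_neg' (x : X →ᵇ ℝ) : m (-x) = - m x := by
  have h := hm.map_smul' (-1) x
  rw [show (-1 : ℝ) • x = -x from neg_one_smul ℝ x] at h
  rw [h]; ring

theorem map_sub' (x y : X →ᵇ ℝ) : m (x - y) = m x - m y := by
  rw [sub_eq_add_neg, hm.map_add', hm.map_neg', sub_eq_add_neg]

theorem map_abs' (x : X →ᵇ ℝ) : m |x| = |m x| := by
  have h1 : |x| = x ⊔ (-x) := rfl
  rw [h1, hm.map_sup', hm.map_neg', ← abs_eq_max_neg]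

theorem map_const' (c : ℝ) : m (const X c) = c := by
  have h1 : const X c = c • (1 : X →ᵇ ℝ) := by
    ext t
    simp
  rw [h1, hm.map_smul', hm.map_one', mul_one]

theorem nonneg {x : X →ᵇ ℝ} (hx : 0 ≤ x) : 0 ≤ m x := by
  have := hm.mono hx
  rwa [hm.map_zero'] at this

theorem map_le_norm (x : X →ᵇ ℝ) : m x ≤ ‖x‖ := by
  have h1 : x ≤ const X ‖x‖ := bcf_le_iff.mpr fun t =>
    (le_abs_self _).trans (x.norm_coe_le_norm t)
  have := hm.mono h1
  rwa [hm.map_const'] at this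

end IsLS

/-- The bounded continuous function `u ↦ min (dist u s) 1`. -/
def fd (s : X) : X →ᵇ ℝ :=
  BoundedContinuousFunction.mkOfBound
    ⟨fun u => min (dist u s) 1, (continuous_id.dist continuous_const).min continuous_const⟩ 1
    (fun x y => Real.dist_le_of_mem_Icc_01
      ⟨le_min dist_nonneg zero_le_one, min_le_right _ _⟩
      ⟨le_min dist_nonneg zero_le_one, min_le_right _ _⟩)

@[simp] theorem fd_apply (s u : X) : fd s u = min (dist u s) 1 := rfl

theorem fd_nonneg (s : X) : (0 : X →ᵇ ℝ) ≤ fd s :=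
  bcf_le_iff.mpr fun t => by simp [le_min dist_nonneg zero_le_one]

@[simp] theorem fd_self (s : X) : fd s s = 0 := by simp

theorem eq_of_fd_eq_zero {s u : X} (h : fd s u = 0) : u = s := by
  rw [fd_apply] at h
  rcases min_eq_iff.mp h with h1 | h1
  · exact dist_eq_zero.mp h1.1
  · exact absurd h1.1 one_ne_zero

/-- Lemma A : a lattice state killing `fd s` is evaluation at `s`. -/
theorem IsLS.eval_of_fd {m : (X →ᵇ ℝ) → ℝ} (hm : IsLS m) {s : X} (h : m (fd s) = 0)
    (g : X →ᵇ ℝ) : m g = g s := by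
  have key : ∀ ε > (0:ℝ), |m g - g s| ≤ ε := by
    intro ε hε
    obtain ⟨δ, hδpos, hδ⟩ := Metric.continuous_iff.mp g.continuous s ε hε
    set δ' := min δ 1 with hδ'
    have hδ'pos : 0 < δ' := lt_min hδpos one_pos
    have hδ'le1 : δ' ≤ 1 := min_le_right _ _
    have hC : (0:ℝ) ≤ 2 * ‖g‖ / δ' := by positivity
    have hpt : ∀ u, |g u - g s| ≤ ε + (2 * ‖g‖ / δ') * fd s u := by
      intro u
      by_cases hd : dist u s < δ'
      · have h1 : dist (g u) (g s) < ε := hδ u (hd.trans_le (min_le_left _ _))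
        rw [Real.dist_eq] at h1
        have hfdnn : (0:ℝ) ≤ fd s u := by
          rw [fd_apply]; exact le_min dist_nonneg zero_le_one
        have h2 : 0 ≤ (2 * ‖g‖ / δ') * fd s u := mul_nonneg hC hfdnn
        linarith
      · push_neg at hd
        have h1 : δ' ≤ fd s u := by
          rw [fd_apply]
          exact le_min hd hδ'le1
        have h2 : |g u - g s| ≤ 2 * ‖g‖ := by
          calc |g u - g s| ≤ |g u| + |g s| := abs_sub _ _
          _ ≤ ‖g‖ + ‖g‖ := add_le_add (g.norm_coe_le_norm u) (g.norm_coe_le_norm s)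
          _ = 2 * ‖g‖ := by ring
        have h3 : 2 * ‖g‖ = (2 * ‖g‖ / δ') * δ' := by field_simp
        have h4 : (2 * ‖g‖ / δ') * δ' ≤ (2 * ‖g‖ / δ') * fd s u :=
          mul_le_mul_of_nonneg_left h1 hC
        linarith
    have hb : |g - (g s) • (1 : X →ᵇ ℝ)| ≤ const X ε + (2 * ‖g‖ / δ') • fd s := by
      refine bcf_le_iff.mpr fun u => ?_
      have h1 : |g - (g s) • (1 : X →ᵇ ℝ)| u = |g u - g s| := by
        simp
      rw [h1]
      simpa using hpt u
    have h5 : m |g - (g s) • (1 : X →ᵇ ℝ)| ≤ ε := by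
      have := hm.mono hb
      rw [hm.map_add', hm.map_const', hm.map_smul', h, mul_zero, add_zero] at this
      exact this
    rw [hm.map_abs'] at h5
    rw [hm.map_sub', hm.map_smul', hm.map_one', mul_one] at h5
    exact h5
  have h6 : |m g - g s| ≤ 0 := le_of_forall_pos_le_add (by simpa using key)
  have := abs_nonneg (m g - g s)
  have h7 : |m g - g s| = 0 := le_antisymm h6 this
  have := abs_eq_zero.mp h7
  linarith [sub_eq_zero.mp (abs_eq_zero.mp h7)]

section Ultra

/-- Limit functional along an ultrafilter evaluated on a sequence. -/
noncomputable def mU (u : ℕ → X) (U : Ultrafilter ℕ) : (X →ᵇ ℝ) → ℝ :=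
  fun g => limUnder (U : Filter ℕ) (fun n => g (u n))

theorem tendsto_mU (u : ℕ → X) (U : Ultrafilter ℕ) (g : X →ᵇ ℝ) :
    Tendsto (fun n => g (u n)) (U : Filter ℕ) (𝓝 (mU u U g)) := by
  refine tendsto_nhds_limUnder ?_
  have hle : (Ultrafilter.map (fun n => g (u n)) U : Filter ℝ) ≤ 𝓟 (Set.Icc (-‖g‖) ‖g‖) := by
    rw [le_principal_iff]
    refine Filter.mem_map.mpr ?_
    have : ∀ n, g (u n) ∈ Set.Icc (-‖g‖) ‖g‖ := fun n =>
      abs_le.mp (g.norm_coe_le_norm (u n))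
    exact Filter.univ_mem' this
  obtain ⟨a, -, ha⟩ := (isCompact_Icc (a := -‖g‖) (b := ‖g‖)).ultrafilter_le_nhds
    (Ultrafilter.map (fun n => g (u n)) U) hle
  exact ⟨a, ha⟩

theorem mU_eq_of_tendsto {u : ℕ → X} {U : Ultrafilter ℕ} {g : X →ᵇ ℝ} {c : ℝ}
    (h : Tendsto (fun n => g (u n)) (U : Filter ℕ) (𝓝 c)) : mU u U g = c :=
  tendsto_nhds_unique (tendsto_mU u U g) h

theorem isLS_mU (u : ℕ → X) (U : Ultrafilter ℕ) : IsLS (mU u U) := by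
  constructor
  · intro x y
    refine mU_eq_of_tendsto ?_
    have := (tendsto_mU u U x).add (tendsto_mU u U y)
    simpa using this
  · intro c x
    refine mU_eq_of_tendsto ?_
    have := (tendsto_mU u U x).const_mul c
    simpa [smul_eq_mul] using this
  · refine mU_eq_of_tendsto ?_
    simpa using (tendsto_const_nhds : Tendsto (fun _ : ℕ => (1:ℝ)) (U : Filter ℕ) (𝓝 1))
  · intro x y
    refine mU_eq_of_tendsto ?_
    have := (tendsto_mU u U x).max (tendsto_mU u U y)
    have heq : (fun n => (x ⊔ y) (u n)) = fun n => max (x (u n)) (y (u n)) := by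
      funext n
      simp [max_def]
    rw [heq]
    exact this

end Ultra

/-- Any subset of the range of a sequence with no accumulation is closed. -/
theorem closed_of_discrete (u : ℕ → X)
    (hcl : ∀ s : X, ∃ ε > 0, {n | u n ∈ Metric.ball s ε}.Finite)
    (S : Set X) (hS : S ⊆ Set.range u) : IsClosed S := by
  rw [← isOpen_compl_iff]
  rw [isOpen_iff_mem_nhds]
  intro x hx
  obtain ⟨ε, hεpos, hF⟩ := hcl x
  set G : Set X := (u '' {n | u n ∈ Metric.ball x ε}) \ {x} with hG
  have hGfin : G.Finite := (hF.image u).diff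
  have hxG : x ∉ G := fun h => h.2 rfl
  have hNopen : IsOpen (Metric.ball x ε ∩ Gᶜ) :=
    Metric.isOpen_ball.inter hGfin.isClosed.isOpen_compl
  have hxN : x ∈ Metric.ball x ε ∩ Gᶜ := ⟨Metric.mem_ball_self hεpos, hxG⟩
  refine Filter.mem_of_superset (hNopen.mem_nhds hxN) ?_
  intro y hy
  intro hyS
  obtain ⟨n, rfl⟩ := hS hyS
  have hyx : u n ≠ x := fun h => hx (h ▸ hyS)
  exact hy.2 ⟨⟨n, hy.1, rfl⟩, hyx⟩

/-- Lemma B : uniqueness of the lattice state killing `f` forces a zero of `f`. -/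
theorem exists_eval (f : X →ᵇ ℝ) (hf0 : (0 : X →ᵇ ℝ) ≤ f) {m : (X →ᵇ ℝ) → ℝ}
    (hm : IsLS m) (hmf : m f = 0)
    (huniq : ∀ m', IsLS m' → m' f = 0 → m' = m) : ∃ s : X, ∀ g, m g = g s := by
  by_cases hz : ∃ s, f s = 0
  · obtain ⟨s, hs⟩ := hz
    have hds : IsLS (fun g : X →ᵇ ℝ => g s) := by
      constructor
      · intro x y; simp
      · intro c x; simp
      · simp
      · intro x y; simp
    have heq := huniq _ hds hs
    exact ⟨s, fun g => by rw [← heq]⟩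
  · exfalso
    push_neg at hz
    have hfpos : ∀ s, 0 < f s := fun s =>
      lt_of_le_of_ne (by simpa using bcf_le_iff.mp hf0 s) (Ne.symm (hz s))
    have hinf : ∀ ε > (0:ℝ), ∃ s, f s < ε := by
      intro ε hε
      by_contra hno
      push_neg at hno
      have h1 : const X ε ≤ f := bcf_le_iff.mpr (by simpa using hno)
      have h2 := hm.mono h1
      rw [hm.map_const', hmf] at h2
      linarith
    have hXne : Nonempty X := ⟨(hinf 1 one_pos).choose⟩
    have hinf' : ∀ ε : ℝ, ∃ s, 0 < ε → f s < ε := by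
      intro ε
      by_cases h : 0 < ε
      · exact (hinf ε h).imp fun s hs _ => hs
      · exact ⟨Classical.arbitrary X, fun h' => absurd h' h⟩
    choose pick hpick using hinf'
    set u : ℕ → X := fun n =>
      Nat.rec (pick 1) (fun k p => pick (min (f p) ((k+2 : ℕ):ℝ)⁻¹)) n with hu
    have hu0 : f (u 0) < 1 := hpick 1 one_pos
    have hustep : ∀ k, f (u (k+1)) < min (f (u k)) ((k+2 : ℕ):ℝ)⁻¹ := by
      intro k
      have hpos : 0 < min (f (u k)) ((k+2 : ℕ):ℝ)⁻¹ :=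
        lt_min (hfpos _) (by positivity)
      exact hpick _ hpos
    have hdec : ∀ k, f (u (k+1)) < f (u k) := fun k =>
      (hustep k).trans_le (min_le_left _ _)
    have hsmall : ∀ k, f (u (k+1)) ≤ ((k+2 : ℕ):ℝ)⁻¹ := fun k =>
      ((hustep k).trans_le (min_le_right _ _)).le
    have htend : Tendsto (fun n => f (u n)) atTop (𝓝 0) := by
      have h1 : Tendsto (fun n : ℕ => ((n+2 : ℕ):ℝ)⁻¹) atTop (𝓝 0) := by
        have hbase : Tendsto (fun n : ℕ => ((n:ℝ) + 2)) atTop atTop :=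
          tendsto_atTop_add_const_right _ 2 tendsto_natCast_atTop_atTop
        have := tendsto_inv_atTop_zero.comp hbase
        refine this.congr fun n => ?_
        simp only [Function.comp]
        norm_cast
      have hsq : Tendsto (fun n : ℕ => f (u (n+1))) atTop (𝓝 0) := by
        refine squeeze_zero (fun n => (hfpos _).le) (fun n => hsmall n) h1
      exact (tendsto_add_atTop_iff_nat 1).mp hsq
    have hanti : StrictAnti (fun n => f (u n)) := strictAnti_nat_of_succ_lt hdec
    have huinj : Function.Injective u := by
      intro a b hab
      exact hanti.injective (by rw [hab])
    have hclu : ∀ s : X, ∃ ε > 0, {n | u n ∈ Metric.ball s ε}.Finite := by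
      intro s
      by_contra h
      push_neg at h
      have hfs0 : f s ≤ 0 := by
        refine le_of_forall_pos_le_add ?_
        intro ε hε
        obtain ⟨δ, hδpos, hδ⟩ := Metric.continuous_iff.mp f.continuous s (ε/2) (by linarith)
        have hinfset := h δ hδpos
        -- choose n in the infinite set with f (u n) < ε/2
        obtain ⟨N, hN⟩ : ∃ N : ℕ, f (u N) < ε/2 := by
          have := htend.eventually (eventually_lt_nhds (show (0:ℝ) < ε/2 by linarith))
          obtain ⟨N, hN⟩ := this.exists
          exact ⟨N, hN⟩
        obtain ⟨n, hn_mem, hn_gt⟩ := Set.Infinite.exists_gt hinfset N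
        have hfn : f (u n) < ε/2 := by
          calc f (u n) ≤ f (u N) := by
                rcases eq_or_lt_of_le hn_gt.le with h' | h'
                · exact le_of_eq (by rw [h'])
                · exact (hanti h').le
          _ < ε/2 := hN
        have hdist := hδ (u n) hn_mem
        rw [Real.dist_eq] at hdist
        have : f s < f (u n) + ε/2 := by
          have := abs_sub_lt_iff.mp hdist
          linarith [this.2]
        linarith
      exact absurd hfs0 (not_le.mpr (hfpos s))
    set E : Set X := u '' {n | Even n} with hE
    set O : Set X := u '' {n | ¬ Even n} with hO
    have hEc : IsClosed E := closed_of_discrete u hclu E (Set.image_subset_range _ _)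
    have hOc : IsClosed O := closed_of_discrete u hclu O (Set.image_subset_range _ _)
    have hdisj : Disjoint E O := by
      exact Set.disjoint_image_image fun n hn k hk hnk => hk (huinj hnk ▸ hn)
    obtain ⟨g, hg0, hg1, hg01⟩ := exists_bounded_zero_one_of_closed hEc hOc hdisj
    have hNeBot : ∀ P : Set ℕ, P.Infinite → (Filter.cofinite ⊓ 𝓟 P).NeBot := by
      intro P hP
      rw [Filter.inf_principal_neBot_iff]
      intro V hV
      have : (P \ Vᶜ).Infinite := hP.diff hV
      obtain ⟨n, hn⟩ := this.nonempty
      exact ⟨n, not_not.mp hn.2, hn.1⟩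
    have hEinf : ({n : ℕ | Even n}).Infinite := by
      have : Set.range (fun k : ℕ => 2 * k) ⊆ {n : ℕ | Even n} := by
        rintro _ ⟨k, rfl⟩
        exact ⟨k, by ring⟩
      exact Set.Infinite.mono this
        (Set.infinite_range_of_injective fun a b h => by omega)
    have hOinf : ({n : ℕ | ¬ Even n}).Infinite := by
      have : Set.range (fun k : ℕ => 2 * k + 1) ⊆ {n : ℕ | ¬ Even n} := by
        rintro _ ⟨k, rfl⟩
        simp [Nat.even_add_one, parity_simps]
      exact Set.Infinite.mono this
        (Set.infinite_range_of_injective fun a b h => by omega)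
    haveI h1 : (Filter.cofinite ⊓ 𝓟 {n : ℕ | Even n}).NeBot := hNeBot _ hEinf
    haveI h2 : (Filter.cofinite ⊓ 𝓟 {n : ℕ | ¬ Even n}).NeBot := hNeBot _ hOinf
    set U : Ultrafilter ℕ := Ultrafilter.of (Filter.cofinite ⊓ 𝓟 {n : ℕ | Even n}) with hU
    set V : Ultrafilter ℕ := Ultrafilter.of (Filter.cofinite ⊓ 𝓟 {n : ℕ | ¬ Even n}) with hV
    have hUle : (U : Filter ℕ) ≤ Filter.cofinite ⊓ 𝓟 {n : ℕ | Even n} := Ultrafilter.of_le _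
    have hVle : (V : Filter ℕ) ≤ Filter.cofinite ⊓ 𝓟 {n : ℕ | ¬ Even n} := Ultrafilter.of_le _
    have hUatTop : (U : Filter ℕ) ≤ atTop := by
      refine le_trans (hUle.trans inf_le_left) ?_
      rw [Nat.cofinite_eq_atTop]
    have hVatTop : (V : Filter ℕ) ≤ atTop := by
      refine le_trans (hVle.trans inf_le_left) ?_
      rw [Nat.cofinite_eq_atTop]
    have hUf : mU u U f = 0 := mU_eq_of_tendsto (htend.mono_left hUatTop)
    have hVf : mU u V f = 0 := mU_eq_of_tendsto (htend.mono_left hVatTop)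
    have hmemU : {n : ℕ | Even n} ∈ (U : Filter ℕ) :=
      (le_principal_iff.mp (hUle.trans inf_le_right))
    have hmemV : {n : ℕ | ¬ Even n} ∈ (V : Filter ℕ) :=
      (le_principal_iff.mp (hVle.trans inf_le_right))
    have hUg : mU u U g = 0 := by
      refine mU_eq_of_tendsto ?_
      refine Tendsto.congr' ?_ (tendsto_const_nhds : Tendsto (fun _ : ℕ => (0:ℝ)) _ _)
      refine Filter.eventuallyEq_of_mem hmemU fun n hn => ?_
      exact (hg0 ⟨n, hn, rfl⟩).symm
    have hVg : mU u V g = 1 := by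
      refine mU_eq_of_tendsto ?_
      refine Tendsto.congr' ?_ (tendsto_const_nhds : Tendsto (fun _ : ℕ => (1:ℝ)) _ _)
      refine Filter.eventuallyEq_of_mem hmemV fun n hn => ?_
      exact (hg1 ⟨n, hn, rfl⟩).symm
    have he1 := huniq _ (isLS_mU u U) hUf
    have he2 := huniq _ (isLS_mU u V) hVf
    have : (0:ℝ) = 1 := by
      calc (0:ℝ) = mU u U g := hUg.symm
      _ = m g := by rw [he1]
      _ = mU u V g := by rw [he2]
      _ = 1 := hVg
    linarith

section Rep

variable (T : (X →ᵇ ℝ) ≃L[ℝ] (X →ᵇ ℝ)) (hT : ∀ x y : X →ᵇ ℝ, T (x ⊔ y) = T x ⊔ T y)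

theorem sup_apply' (x y : X →ᵇ ℝ) (t : X) : (x ⊔ y) t = max (x t) (y t) := by
  simp

include hT

theorem symm_sup : ∀ x y : X →ᵇ ℝ, T.symm (x ⊔ y) = T.symm x ⊔ T.symm y := by
  intro x y
  apply T.injective
  rw [hT, T.apply_symm_apply, T.apply_symm_apply, T.apply_symm_apply]

theorem T_pos : ∀ x : X →ᵇ ℝ, 0 ≤ x → 0 ≤ T x := by
  intro x hx
  have h1 : x ⊔ 0 = x := sup_eq_left.mpr hx
  have h2 := hT x 0
  rw [h1, map_zero] at h2
  rw [h2]
  exact le_sup_right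

theorem T_mono : ∀ x y : X →ᵇ ℝ, x ≤ y → T x ≤ T y := by
  intro x y h
  have h1 : (0 : X →ᵇ ℝ) ≤ y - x := by
    rw [sub_nonneg]; exact h
  have h2 := T_pos T hT _ h1
  rw [map_sub, sub_nonneg] at h2
  exact h2

theorem T_abs : ∀ x : X →ᵇ ℝ, T |x| = |T x| := by
  intro x
  have h1 : |x| = x ⊔ (-x) := rfl
  have h2 : |T x| = T x ⊔ (-(T x)) := rfl
  rw [h1, h2, hT, map_neg]

theorem T_abs_le : ∀ x : X →ᵇ ℝ, |T x| ≤ ‖x‖ • T 1 := by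
  intro x
  have h1 : |x| ≤ ‖x‖ • (1 : X →ᵇ ℝ) := bcf_le_iff.mpr fun t => by
    simpa using x.norm_coe_le_norm t
  calc |T x| = T |x| := (T_abs T hT x).symm
  _ ≤ T (‖x‖ • (1 : X →ᵇ ℝ)) := T_mono T hT _ _ h1
  _ = ‖x‖ • T 1 := map_smul _ _ _

theorem T1_lower [Nonempty X] : ∀ t : X, ‖(T.symm 1 : X →ᵇ ℝ)‖⁻¹ ≤ T 1 t := by
  intro t
  set b := (T.symm 1 : X →ᵇ ℝ) with hb
  have hbne : b ≠ 0 := by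
    intro h
    have : (1 : X →ᵇ ℝ) = 0 := by
      rw [← T.apply_symm_apply 1, ← hb, h, map_zero]
    have := congrFun (congrArg DFunLike.coe this) (Classical.arbitrary X)
    simp at this
  have hbpos : 0 < ‖b‖ := norm_pos_iff.mpr hbne
  have h1 := T_abs_le T hT b
  have h2 := bcf_le_iff.mp h1 t
  have h3 : T b = 1 := T.apply_symm_apply 1
  rw [h3] at h2
  have h4 : |(1 : X →ᵇ ℝ)| t = 1 := by simp [abs_of_nonneg]
  have h5 : (‖b‖ • T 1) t = ‖b‖ * T 1 t := by simp
  rw [h4, h5] at h2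
  rw [inv_le_iff_one_le_mul₀ hbpos]
  linarith

theorem T1_pos [Nonempty X] : ∀ t : X, 0 < T 1 t := fun t =>
  lt_of_lt_of_le (by
    have hbne : (T.symm 1 : X →ᵇ ℝ) ≠ 0 := by
      intro h
      have : (1 : X →ᵇ ℝ) = 0 := by
        rw [← T.apply_symm_apply 1, h, map_zero]
      have := congrFun (congrArg DFunLike.coe this) (Classical.arbitrary X)
      simp at this
    exact inv_pos.mpr (norm_pos_iff.mpr hbne)) (T1_lower T hT t)

/-- The pointwise representation: for each `t` there is `s` with `T x t = T 1 t * x s`. -/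
theorem rep_point [Nonempty X] (t : X) : ∃ s : X, ∀ x : X →ᵇ ℝ, T x t = T 1 t * x s := by
  have hTsymm := symm_sup T hT
  have hapos := T1_pos T hT
  set a := (T 1 : X →ᵇ ℝ) with ha
  set b := (T.symm 1 : X →ᵇ ℝ) with hb
  set m : (X →ᵇ ℝ) → ℝ := fun x => T x t / a t with hmdef
  have hmLS : IsLS m := by
    constructor
    · intro x y
      simp only [hmdef, map_add]
      rw [show ((T x + T y : X →ᵇ ℝ)) t = T x t + T y t from rfl]
      ring
    · intro c x
      simp only [hmdef, map_smul]
      rw [show ((c • T x : X →ᵇ ℝ)) t = c * T x t by simp [smul_eq_mul]]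
      ring
    · simp only [hmdef]
      exact div_self (hapos t).ne'
    · intro x y
      simp only [hmdef, hT x y, sup_apply']
      exact (max_div_div_right (hapos t).le _ _).symm
  set fh := (T.symm (fd t) : X →ᵇ ℝ) with hfh
  have hfh0 : (0 : X →ᵇ ℝ) ≤ fh := by
    have := T_pos T.symm hTsymm (fd t) (fd_nonneg t)
    simpa [hfh] using this
  have hTfh : T fh = fd t := T.apply_symm_apply _
  have hmfh : m fh = 0 := by
    simp only [hmdef, hTfh]
    simp
  have huniq : ∀ m', IsLS m' → m' fh = 0 → m' = m := by
    intro m' hm' h0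
    have hblow : ∀ u : X, ‖a‖⁻¹ ≤ b u := by
      have := T1_lower T.symm hTsymm
      simpa [hb, ha] using this
    have hanorm : 0 < ‖a‖ := by
      have : a ≠ 0 := fun h => by
        have := hapos (Classical.arbitrary X)
        rw [h] at this
        simp at this
      exact norm_pos_iff.mpr this
    have hmb_pos : 0 < m' b := by
      have h1 : const X (‖a‖⁻¹) ≤ b := bcf_le_iff.mpr fun u => by simpa using hblow u
      have h2 := hm'.mono h1
      rw [hm'.map_const'] at h2
      exact lt_of_lt_of_le (inv_pos.mpr hanorm) h2
    set n : (X →ᵇ ℝ) → ℝ := fun y => m' (T.symm y) / m' b with hndef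
    have hnLS : IsLS n := by
      constructor
      · intro x y
        simp only [hndef, map_add, hm'.map_add']
        ring
      · intro c x
        simp only [hndef, map_smul, hm'.map_smul']
        ring
      · simp only [hndef]
        exact div_self hmb_pos.ne'
      · intro x y
        simp only [hndef, hTsymm x y, hm'.map_sup']
        exact (max_div_div_right hmb_pos.le _ _).symm
    have hnfd : n (fd t) = 0 := by
      simp only [hndef, ← hfh, h0, zero_div]
    have heval := hnLS.eval_of_fd hnfd
    have hx : ∀ x : X →ᵇ ℝ, m' x = T x t * m' b := by
      intro x
      have h1 := heval (T x)
      simp only [hndef, T.symm_apply_apply] at h1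
      field_simp at h1
      linarith [h1]
    have h1 : (1:ℝ) = a t * m' b := by
      have := hx 1
      rw [hm'.map_one'] at this
      exact this
    funext x
    rw [hx x]
    show T x t * m' b = T x t / a t
    rw [eq_div_iff (hapos t).ne']
    have h2 : a t * m' b = 1 := h1.symm
    calc T x t * m' b * a t = T x t * (a t * m' b) := by ring
    _ = T x t := by rw [h2, mul_one]
  obtain ⟨s, hs⟩ := exists_eval fh hfh0 hmLS hmfh huniq
  refine ⟨s, fun x => ?_⟩
  have h2 : T x t / a t = x s := hs x
  rw [div_eq_iff (hapos t).ne'] at h2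
  rw [h2]
  ring

/-- Full representation with a continuous `φ`. -/
theorem rep_cont [Nonempty X] :
    ∃ φ : X → X, Continuous φ ∧ ∀ (x : X →ᵇ ℝ) (t : X), T x t = T 1 t * x (φ t) := by
  have hapos := T1_pos T hT
  choose φ hφ using rep_point T hT
  refine ⟨φ, ?_, fun x t => hφ t x⟩
  rw [Metric.continuous_iff]
  intro t ε hε
  set x0 := fd (φ t) with hx0
  have hc : Continuous fun t' => T x0 t' / T 1 t' :=
    ((T x0).continuous.div (T 1).continuous fun t' => (hapos t').ne')
  have hval : ∀ t', T x0 t' / T 1 t' = x0 (φ t') := by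
    intro t'
    rw [hφ t' x0]
    exact mul_div_cancel_left₀ _ (hapos t').ne'
  obtain ⟨δ, hδpos, hδ⟩ := Metric.continuous_iff.mp hc t (min ε 1) (lt_min hε one_pos)
  refine ⟨δ, hδpos, fun t' ht' => ?_⟩
  have h1 := hδ t' ht'
  rw [hval, hval] at h1
  have h2 : x0 (φ t) = 0 := by simp [hx0]
  rw [h2] at h1
  have h3 : x0 (φ t') = min (dist (φ t') (φ t)) 1 := rfl
  have h4 : 0 ≤ x0 (φ t') := by
    rw [h3]; exact le_min dist_nonneg zero_le_one
  rw [Real.dist_eq, sub_zero, abs_of_nonneg h4, h3] at h1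
  by_cases hd : dist (φ t') (φ t) < 1
  · rw [min_eq_left hd.le] at h1
    exact h1.trans_le (min_le_left _ _)
  · exfalso
    push_neg at hd
    rw [min_eq_right hd] at h1
    have := min_le_right ε 1
    linarith
end Rep

end Stmt19Aux

open Stmt19Aux in
/-- **Proposition 6.7.** Let `X` be a metric space. Any lattice isomorphism `T` of
`C_b(X)` is a weighted composition operator: `(T x)(t) = a(t)·x(φ(t))` for a bounded
continuous `a` with `inf a > 0` and a homeomorphism `φ : X → X`; moreover `‖a‖ = ‖T‖`. -/
theorem stmt19 {X : Type*} [MetricSpace X]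
    (T : (X →ᵇ ℝ) ≃L[ℝ] (X →ᵇ ℝ))
    (hT : ∀ x y : X →ᵇ ℝ, T (x ⊔ y) = T x ⊔ T y) :
    ∃ (a : X →ᵇ ℝ) (φ : X ≃ₜ X),
      (∃ c > 0, ∀ t, c ≤ a t) ∧
      (∀ (x : X →ᵇ ℝ) (t : X), T x t = a t * x (φ t)) ∧
      ‖a‖ = ‖(T : (X →ᵇ ℝ) →L[ℝ] (X →ᵇ ℝ))‖ := by
  classical
  by_cases hX : Nonempty X
  · obtain ⟨φf, hφc, hφ⟩ := rep_cont T hT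
    have hTsymm := symm_sup T hT
    obtain ⟨ψf, hψc, hψ⟩ := rep_cont T.symm hTsymm
    have hapos := T1_pos T hT
    have hbpos := T1_pos T.symm hTsymm
    have hfg : ∀ t, φf (ψf t) = t := by
      intro t
      have hxt : ∀ x : X →ᵇ ℝ, x t = T.symm 1 t * (T 1 (ψf t) * x (φf (ψf t))) := by
        intro x
        have h1 := hψ (T x) t
        rw [T.symm_apply_apply] at h1
        rw [hφ x (ψf t)] at h1
        exact h1
      have h2 := hxt (fd t)
      rw [fd_self] at h2
      have h3 : fd t (φf (ψf t)) = 0 := by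
        have hb' := hbpos t
        have ha' := hapos (ψf t)
        by_contra hne
        have hfdnn : 0 ≤ fd t (φf (ψf t)) := by
          rw [fd_apply]; exact le_min dist_nonneg zero_le_one
        have hge : 0 < fd t (φf (ψf t)) := lt_of_le_of_ne hfdnn (Ne.symm hne)
        nlinarith [mul_pos hb' (mul_pos ha' hge)]
      exact eq_of_fd_eq_zero h3
    have hgf : ∀ t, ψf (φf t) = t := by
      intro t
      have hxt : ∀ x : X →ᵇ ℝ, x t = T 1 t * (T.symm 1 (φf t) * x (ψf (φf t))) := by
        intro x
        have h1 := hφ (T.symm x) t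
        rw [T.apply_symm_apply] at h1
        rw [hψ x (φf t)] at h1
        exact h1
      have h2 := hxt (fd t)
      rw [fd_self] at h2
      have h3 : fd t (ψf (φf t)) = 0 := by
        have hb' := hbpos (φf t)
        have ha' := hapos t
        by_contra hne
        have hfdnn : 0 ≤ fd t (ψf (φf t)) := by
          rw [fd_apply]; exact le_min dist_nonneg zero_le_one
        have hge : 0 < fd t (ψf (φf t)) := lt_of_le_of_ne hfdnn (Ne.symm hne)
        nlinarith [mul_pos hb' (mul_pos ha' hge)]
      exact eq_of_fd_eq_zero h3
    have hbne : (T.symm 1 : X →ᵇ ℝ) ≠ 0 := by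
      intro h
      have h1 := hbpos (Classical.arbitrary X)
      rw [h] at h1
      simp at h1
    refine ⟨T 1,
      { toFun := φf, invFun := ψf, left_inv := hgf, right_inv := hfg,
        continuous_toFun := hφc, continuous_invFun := hψc },
      ⟨‖(T.symm 1 : X →ᵇ ℝ)‖⁻¹, inv_pos.mpr (norm_pos_iff.mpr hbne), T1_lower T hT⟩,
      fun x t => hφ x t, ?_⟩
    apply le_antisymm
    · calc ‖(T 1 : X →ᵇ ℝ)‖ = ‖(T : (X →ᵇ ℝ) →L[ℝ] (X →ᵇ ℝ)) 1‖ := rfl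
      _ ≤ ‖(T : (X →ᵇ ℝ) →L[ℝ] (X →ᵇ ℝ))‖ * ‖(1 : X →ᵇ ℝ)‖ :=
        ContinuousLinearMap.le_opNorm _ _
      _ = ‖(T : (X →ᵇ ℝ) →L[ℝ] (X →ᵇ ℝ))‖ := by rw [norm_one, mul_one]
    · refine ContinuousLinearMap.opNorm_le_bound _ (norm_nonneg _) fun x => ?_
      have hTx : ((T : (X →ᵇ ℝ) →L[ℝ] (X →ᵇ ℝ)) x) = T x := rfl
      rw [hTx]
      refine (BoundedContinuousFunction.norm_le
        (mul_nonneg (norm_nonneg _) (norm_nonneg _))).mpr fun t => ?_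
      rw [hφ x t, Real.norm_eq_abs, abs_mul]
      have h1 : |T 1 t| ≤ ‖(T 1 : X →ᵇ ℝ)‖ := by
        have := (T 1 : X →ᵇ ℝ).norm_coe_le_norm t
        rwa [Real.norm_eq_abs] at this
      have h2 : |x (φf t)| ≤ ‖x‖ := by
        have := x.norm_coe_le_norm (φf t)
        rwa [Real.norm_eq_abs] at this
      exact mul_le_mul h1 h2 (abs_nonneg _) (norm_nonneg _)
  · haveI : IsEmpty X := not_nonempty_iff.mp hX
    have hall : ∀ f : X →ᵇ ℝ, f = 0 := fun f => by
      ext t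
      exact isEmptyElim t
    refine ⟨0, Homeomorph.refl X, ⟨1, one_pos, fun t => isEmptyElim t⟩,
      fun x t => isEmptyElim t, ?_⟩
    rw [norm_zero]
    symm
    refine le_antisymm ?_ (ContinuousLinearMap.opNorm_nonneg _)
    refine ContinuousLinearMap.opNorm_le_bound _ le_rfl fun x => ?_
    have h1 : ((T : (X →ᵇ ℝ) →L[ℝ] (X →ᵇ ℝ)) x) = 0 := hall _
    rw [h1, norm_zero]
    positivity
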